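/- Let T > 0 and let f : [0,∞) → [0,∞] be Borel measurable with ∫_0^T f(s) ds < ∞. Then the following three quantities in [0,∞] are equal: (i) limsup_{t→∞} (1/t) ∫_0^t f(s) ds; (ii) limsup_{n→∞} (1/T) ∫_0^T (1/(nT)) ∫_0^{r+nT} f(s) ds dr; (iii) limsup_{t→∞} (1/t) ∫_0^t ( (1/T) ∫_0^T f(r+s) dr ) ds. -/

import Mathlib

open MeasureTheory Filter


open MeasureTheory Filter Set Topology

namespace Stmt0Aux

lemma div_eq_factor_mul_div (a u : ENNReal) {v : ENNReal} (hv0 : v ≠ 0) (hvt : v ≠ ⊤) :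
    a / u = (v / u) * (a / v) := by
  rw [div_eq_mul_inv, div_eq_mul_inv, div_eq_mul_inv]
  calc a * u⁻¹ = (v * v⁻¹) * (a * u⁻¹) := by
        rw [ENNReal.mul_inv_cancel hv0 hvt, one_mul]
    _ = v * u⁻¹ * (a * v⁻¹) := by ring

lemma limsup_comp_le {γ : Type*} {F : Filter γ} {u : γ → ℝ} (h : Tendsto u F atTop)
    (g : ℝ → ENNReal) : limsup (fun x => g (u x)) F ≤ limsup g atTop := by
  have : limsup (fun x => g (u x)) F = limsup g (Filter.map u F) := by
    simp only [Filter.limsup, Filter.map_map]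
    rfl
  rw [this]
  exact limsup_le_limsup_of_le h

lemma limsup_comp_le_nat {γ : Type*} {F : Filter γ} {u : γ → ℕ} (h : Tendsto u F atTop)
    (g : ℕ → ENNReal) : limsup (fun x => g (u x)) F ≤ limsup g atTop := by
  have : limsup (fun x => g (u x)) F = limsup g (Filter.map u F) := by
    simp only [Filter.limsup, Filter.map_map]
    rfl
  rw [this]
  exact limsup_le_limsup_of_le h

lemma key_eps {X L : ENNReal}
    (h : ∀ m : ℕ, 0 < m → X ≤ ENNReal.ofReal (1 + 1 / m) * L) : X ≤ L := by
  have h1 : Tendsto (fun m : ℕ => (1 + 1 / (m : ℝ))) atTop (𝓝 1) := by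
    simpa using tendsto_const_nhds.add
      (tendsto_one_div_atTop_nhds_zero_nat : Tendsto (fun n : ℕ => 1 / (n : ℝ)) atTop (𝓝 0))
  have h2 : Tendsto (fun m : ℕ => ENNReal.ofReal (1 + 1 / m)) atTop (𝓝 1) := by
    have := (ENNReal.continuous_ofReal.tendsto 1).comp h1
    simpa [Function.comp_def] using this
  have h3 : Tendsto (fun m : ℕ => ENNReal.ofReal (1 + 1 / m) * L) atTop (𝓝 L) := by
    have := ENNReal.Tendsto.mul_const (b := L) h2 (Or.inl one_ne_zero)
    simpa using this
  exact ge_of_tendsto h3 (eventually_atTop.2 ⟨1, fun m hm => h m hm⟩)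

lemma div_le_factor (a : ENNReal) {b c k : ℝ} (hb : 0 < b) (hbc : b ≤ c) (hck : c ≤ k * b) :
    a / ENNReal.ofReal b ≤ ENNReal.ofReal k * (a / ENNReal.ofReal c) := by
  have hc : 0 < c := hb.trans_le hbc
  rw [div_eq_factor_mul_div a (ENNReal.ofReal b) (v := ENNReal.ofReal c)
    (by simp [hc.not_ge]) ENNReal.ofReal_ne_top]
  refine mul_le_mul_left ?_ _
  rw [← ENNReal.ofReal_div_of_pos hb]
  exact ENNReal.ofReal_le_ofReal ((div_le_iff₀ hb).2 hck)

lemma limsup_shift (h : ℕ → ENNReal) :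
    limsup (fun n => h (n + 1)) atTop = limsup h atTop := by
  apply le_antisymm
  · exact limsup_comp_le_nat (tendsto_add_atTop_nat 1) h
  · have heq : limsup h atTop = limsup (fun n => h ((n - 1) + 1)) atTop := by
      apply limsup_congr
      filter_upwards [eventually_ge_atTop 1] with n hn
      rw [Nat.sub_add_cancel hn]
    rw [heq]
    exact limsup_comp_le_nat (tendsto_sub_atTop_nat 1) (fun n => h (n + 1))

end Stmt0Aux

namespace Stmt0Aux

lemma mul_div_cancel_right_e (c : ENNReal) {v : ENNReal} (h0 : v ≠ 0) (ht : v ≠ ⊤) :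
    c * v / v = c := by
  rw [div_eq_mul_inv, mul_assoc, ← div_eq_mul_inv, ENNReal.div_self h0 ht, mul_one]

lemma seq_limsups (T : ℝ) (hT : 0 < T) (F : ℝ → ENNReal) (hFmono : Monotone F) :
    limsup (fun n : ℕ => F ((n + 1) * T) / ENNReal.ofReal (n * T)) atTop
      = limsup (fun t : ℝ => F t / ENNReal.ofReal t) atTop ∧
    limsup (fun n : ℕ => F (n * T) / ENNReal.ofReal (n * T)) atTop
      = limsup (fun t : ℝ => F t / ENNReal.ofReal t) atTop := by
  set L := limsup (fun t : ℝ => F t / ENNReal.ofReal t) atTop with hL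
  set h : ℕ → ENNReal := fun n => F (n * T) / ENNReal.ofReal (n * T) with hhdef
  set g : ℕ → ENNReal := fun n => F ((n + 1) * T) / ENNReal.ofReal (n * T) with hgdef
  have hhL : limsup h atTop ≤ L := by
    have hu : Tendsto (fun n : ℕ => (n : ℝ) * T) atTop atTop :=
      tendsto_natCast_atTop_atTop.atTop_mul_const hT
    exact limsup_comp_le hu (fun t => F t / ENNReal.ofReal t)
  have hgh : limsup g atTop ≤ limsup h atTop := by
    apply key_eps
    intro m hm
    have hev : ∀ᶠ n : ℕ in atTop, g n ≤ ENNReal.ofReal (1 + 1 / m) * h (n + 1) := by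
      filter_upwards [eventually_ge_atTop (max 1 m)] with n hn
      have hn1 : (1 : ℕ) ≤ n := le_of_max_le_left hn
      have hnm : m ≤ n := le_of_max_le_right hn
      have hn1' : (1 : ℝ) ≤ (n : ℝ) := by exact_mod_cast hn1
      have hm' : (0 : ℝ) < m := by exact_mod_cast hm
      have hnm' : (m : ℝ) ≤ n := by exact_mod_cast hnm
      have h1 : (1 : ℝ) ≤ (n : ℝ) / m := (one_le_div hm').2 hnm'
      have hb : (0 : ℝ) < n * T := by nlinarith
      have hbc : (n : ℝ) * T ≤ (n + 1) * T := by nlinarith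
      have hck : ((n : ℝ) + 1) * T ≤ (1 + 1 / m) * (n * T) := by
        have h2 : T ≤ ((n : ℝ) / m) * T := by nlinarith
        have h3 : (1 + 1 / m) * ((n : ℝ) * T) = (n : ℝ) * T + ((n : ℝ) / m) * T := by
          field_simp
        nlinarith
      have := div_le_factor (F ((n + 1) * T)) hb hbc hck
      simp only [hgdef, hhdef]
      push_cast
      exact this
    calc limsup g atTop
        ≤ limsup (fun n => ENNReal.ofReal (1 + 1 / m) * h (n + 1)) atTop :=
          limsup_le_limsup hev
      _ = ENNReal.ofReal (1 + 1 / m) * limsup (fun n => h (n + 1)) atTop :=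
          ENNReal.limsup_const_mul_of_ne_top ENNReal.ofReal_ne_top
      _ = ENNReal.ofReal (1 + 1 / m) * limsup h atTop := by rw [limsup_shift]
  have hLg : L ≤ limsup g atTop := by
    have hev : ∀ᶠ t : ℝ in atTop, F t / ENNReal.ofReal t ≤ g (⌊t / T⌋₊) := by
      filter_upwards [eventually_ge_atTop T] with t ht
      have ht0 : 0 < t := hT.trans_le ht
      have hdiv0 : 0 ≤ t / T := by positivity
      have hfl : (⌊t / T⌋₊ : ℝ) * T ≤ t := by
        have := Nat.floor_le hdiv0
        calc (⌊t / T⌋₊ : ℝ) * T ≤ (t / T) * T := by nlinarith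
          _ = t := by field_simp
      have hfu : t ≤ ((⌊t / T⌋₊ : ℝ) + 1) * T := by
        have := (Nat.lt_floor_add_one (t / T)).le
        calc t = (t / T) * T := by field_simp
          _ ≤ ((⌊t / T⌋₊ : ℝ) + 1) * T := by nlinarith
      simp only [hgdef]
      calc F t / ENNReal.ofReal t
          ≤ F ((⌊t / T⌋₊ + 1 : ℝ) * T) / ENNReal.ofReal t :=
            ENNReal.div_le_div_right (hFmono hfu) _
        _ ≤ F ((⌊t / T⌋₊ + 1 : ℝ) * T) / ENNReal.ofReal ((⌊t / T⌋₊ : ℝ) * T) :=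
            ENNReal.div_le_div_left (ENNReal.ofReal_le_ofReal hfl) _
    calc L ≤ limsup (fun t : ℝ => g ⌊t / T⌋₊) atTop := limsup_le_limsup hev
      _ ≤ limsup g atTop :=
        limsup_comp_le_nat (tendsto_nat_floor_atTop.comp (tendsto_id.atTop_div_const hT)) g
  exact ⟨le_antisymm (hgh.trans hhL) hLg, le_antisymm hhL (hLg.trans hgh)⟩

lemma limsup_shift_real (T : ℝ) (hT : 0 < T) (F : ℝ → ENNReal) :
    limsup (fun t : ℝ => F (t + T) / ENNReal.ofReal t) atTop
      ≤ limsup (fun t : ℝ => F t / ENNReal.ofReal t) atTop := by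
  apply key_eps
  intro m hm
  have hm' : (0 : ℝ) < m := by exact_mod_cast hm
  have h1 : limsup (fun t : ℝ => F (t + T) / ENNReal.ofReal (t + T)) atTop
      ≤ limsup (fun t : ℝ => F t / ENNReal.ofReal t) atTop :=
    limsup_comp_le (tendsto_atTop_add_const_right atTop T tendsto_id)
      (fun t => F t / ENNReal.ofReal t)
  have hev : ∀ᶠ t : ℝ in atTop, F (t + T) / ENNReal.ofReal t
      ≤ ENNReal.ofReal (1 + 1 / m) * (F (t + T) / ENNReal.ofReal (t + T)) := by
    filter_upwards [eventually_ge_atTop (m * T)] with t ht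
    have ht0 : 0 < t := by nlinarith
    apply div_le_factor _ ht0 (le_add_of_nonneg_right hT.le)
    have : T ≤ t / m := by
      rw [le_div_iff₀ hm']; nlinarith
    have h3 : (1 + 1 / m) * t = t + t / m := by field_simp
    nlinarith
  calc limsup (fun t : ℝ => F (t + T) / ENNReal.ofReal t) atTop
      ≤ limsup (fun t : ℝ => ENNReal.ofReal (1 + 1 / m)
          * (F (t + T) / ENNReal.ofReal (t + T))) atTop := limsup_le_limsup hev
    _ = ENNReal.ofReal (1 + 1 / m)
          * limsup (fun t : ℝ => F (t + T) / ENNReal.ofReal (t + T)) atTop :=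
        ENNReal.limsup_const_mul_of_ne_top ENNReal.ofReal_ne_top
    _ ≤ ENNReal.ofReal (1 + 1 / m) * limsup (fun t : ℝ => F t / ENNReal.ofReal t) atTop :=
        mul_le_mul_right h1 _

end Stmt0Aux

open Stmt0Aux

/-- For `T > 0` and Borel measurable `f : [0,∞) → [0,∞]` with
`∫_0^T f < ∞`, the three limsups (as elements of `[0,∞]`) agree:
(i) `limsup_{t→∞} (1/t) ∫_0^t f`,
(ii) `limsup_{n→∞} (1/T) ∫_0^T (1/(nT)) ∫_0^{r+nT} f dr`,
(iii) `limsup_{t→∞} (1/t) ∫_0^t ((1/T) ∫_0^T f(r+s) dr) ds`. -/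
theorem stmt_0 (T : ℝ) (hT : 0 < T) (f : ℝ → ENNReal) (hf : Measurable f)
    (hint : ∫⁻ s in Set.Icc (0 : ℝ) T, f s < ⊤) :
    limsup (fun t : ℝ => (∫⁻ s in Set.Icc (0 : ℝ) t, f s) / ENNReal.ofReal t) atTop
        = limsup (fun n : ℕ =>
            (∫⁻ r in Set.Icc (0 : ℝ) T,
              (∫⁻ s in Set.Icc (0 : ℝ) (r + n * T), f s) / ENNReal.ofReal (n * T)) /
              ENNReal.ofReal T) atTop
      ∧
      limsup (fun t : ℝ => (∫⁻ s in Set.Icc (0 : ℝ) t, f s) / ENNReal.ofReal t) atTop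
        = limsup (fun t : ℝ =>
            (∫⁻ s in Set.Icc (0 : ℝ) t,
              (∫⁻ r in Set.Icc (0 : ℝ) T, f (r + s)) / ENNReal.ofReal T) /
              ENNReal.ofReal t) atTop := by

  have hT0 : ENNReal.ofReal T ≠ 0 := by simp [hT.not_ge]
  have hTt : ENNReal.ofReal T ≠ ⊤ := ENNReal.ofReal_ne_top
  set F : ℝ → ENNReal := fun t => ∫⁻ s in Set.Icc (0 : ℝ) t, f s with hFdef
  have hFmono : Monotone F := fun a b hab =>
    lintegral_mono_set (Icc_subset_Icc_right hab)
  obtain ⟨hg, hh⟩ := seq_limsups T hT F hFmono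
  constructor
  · -- part (i) = (ii)
    have hev1 : ∀ᶠ n : ℕ in atTop,
        F (n * T) / ENNReal.ofReal (n * T) ≤
        (∫⁻ r in Set.Icc (0 : ℝ) T,
          (∫⁻ s in Set.Icc (0 : ℝ) (r + n * T), f s) / ENNReal.ofReal (n * T)) /
          ENNReal.ofReal T := by
      filter_upwards [eventually_ge_atTop 1] with n hn
      have hlow : ∫⁻ r in Set.Icc (0 : ℝ) T, F (n * T) / ENNReal.ofReal (n * T)
          ≤ ∫⁻ r in Set.Icc (0 : ℝ) T,
              (∫⁻ s in Set.Icc (0 : ℝ) (r + n * T), f s) / ENNReal.ofReal (n * T) := by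
        apply lintegral_mono_ae
        refine (ae_restrict_iff' measurableSet_Icc).2 (ae_of_all _ fun r hr => ?_)
        exact ENNReal.div_le_div_right (hFmono (le_add_of_nonneg_left hr.1)) _
      rw [setLIntegral_const, Real.volume_Icc, sub_zero] at hlow
      have := ENNReal.div_le_div_right hlow (ENNReal.ofReal T)
      rwa [mul_div_cancel_right_e _ hT0 hTt] at this
    have hev2 : ∀ᶠ n : ℕ in atTop,
        (∫⁻ r in Set.Icc (0 : ℝ) T,
          (∫⁻ s in Set.Icc (0 : ℝ) (r + n * T), f s) / ENNReal.ofReal (n * T)) /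
          ENNReal.ofReal T ≤
        F ((n + 1) * T) / ENNReal.ofReal (n * T) := by
      filter_upwards [eventually_ge_atTop 1] with n hn
      have hup : (∫⁻ r in Set.Icc (0 : ℝ) T,
            (∫⁻ s in Set.Icc (0 : ℝ) (r + n * T), f s) / ENNReal.ofReal (n * T))
          ≤ ∫⁻ r in Set.Icc (0 : ℝ) T, F ((n + 1) * T) / ENNReal.ofReal (n * T) := by
        apply lintegral_mono_ae
        refine (ae_restrict_iff' measurableSet_Icc).2 (ae_of_all _ fun r hr => ?_)
        refine ENNReal.div_le_div_right (hFmono ?_) _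
        nlinarith [hr.2]
      rw [setLIntegral_const, Real.volume_Icc, sub_zero] at hup
      have := ENNReal.div_le_div_right hup (ENNReal.ofReal T)
      rwa [mul_div_cancel_right_e _ hT0 hTt] at this
    refine le_antisymm ?_ ?_
    · rw [← hh]
      exact limsup_le_limsup hev1
    · rw [← hg]
      exact limsup_le_limsup hev2
  · -- part (i) = (iii)
    set B : ℝ → ENNReal := fun t =>
      (∫⁻ s in Set.Icc (0 : ℝ) t,
        (∫⁻ r in Set.Icc (0 : ℝ) T, f (r + s)) / ENNReal.ofReal T) /
        ENNReal.ofReal t with hBdef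
    -- pull the constant division out
    have hpull : ∀ t : ℝ,
        (∫⁻ s in Set.Icc (0 : ℝ) t,
          (∫⁻ r in Set.Icc (0 : ℝ) T, f (r + s)) / ENNReal.ofReal T)
        = (∫⁻ s in Set.Icc (0 : ℝ) t, ∫⁻ r in Set.Icc (0 : ℝ) T, f (r + s))
            / ENNReal.ofReal T := by
      intro t
      simp_rw [div_eq_mul_inv]
      exact lintegral_mul_const' _ _ (ENNReal.inv_ne_top.2 hT0)
    -- Tonelli + translation
    have hswap : ∀ t : ℝ,
        (∫⁻ s in Set.Icc (0 : ℝ) t, ∫⁻ r in Set.Icc (0 : ℝ) T, f (r + s))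
        = ∫⁻ r in Set.Icc (0 : ℝ) T, ∫⁻ x in Set.Icc r (r + t), f x := by
      intro t
      rw [lintegral_lintegral_swap]
      · refine lintegral_congr fun r => ?_
        have hpre : (fun s : ℝ => r + s) ⁻¹' Set.Icc r (r + t) = Set.Icc (0 : ℝ) t := by
          ext x
          simp only [Set.mem_preimage, Set.mem_Icc]
          constructor <;> intro hx <;> constructor <;> linarith [hx.1, hx.2]
        rw [← hpre,
          (measurePreserving_add_left volume r).setLIntegral_comp_preimage_emb
            (measurableEmbedding_addLeft r) f _]
      · exact (hf.comp (measurable_snd.add measurable_fst)).aemeasurable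
    -- upper bound
    have hBub : ∀ᶠ t : ℝ in atTop, B t ≤ F (t + T) / ENNReal.ofReal t := by
      filter_upwards [eventually_ge_atTop 0] with t ht
      have hub : (∫⁻ r in Set.Icc (0 : ℝ) T, ∫⁻ x in Set.Icc r (r + t), f x)
          ≤ F (t + T) * ENNReal.ofReal T := by
        calc (∫⁻ r in Set.Icc (0 : ℝ) T, ∫⁻ x in Set.Icc r (r + t), f x)
            ≤ ∫⁻ r in Set.Icc (0 : ℝ) T, F (t + T) := by
              apply lintegral_mono_ae
              refine (ae_restrict_iff' measurableSet_Icc).2 (ae_of_all _ fun r hr => ?_)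
              apply lintegral_mono_set
              intro x hx
              exact ⟨by linarith [hr.1, hx.1], by linarith [hr.2, hx.2]⟩
          _ = F (t + T) * ENNReal.ofReal T := by
              rw [setLIntegral_const, Real.volume_Icc, sub_zero]
      simp only [hBdef]
      rw [hpull, hswap]
      calc (∫⁻ r in Set.Icc (0 : ℝ) T, ∫⁻ x in Set.Icc r (r + t), f x)
            / ENNReal.ofReal T / ENNReal.ofReal t
          ≤ F (t + T) * ENNReal.ofReal T / ENNReal.ofReal T / ENNReal.ofReal t :=
            ENNReal.div_le_div_right (ENNReal.div_le_div_right hub _) _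
        _ = F (t + T) / ENNReal.ofReal t := by
            rw [mul_div_cancel_right_e _ hT0 hTt]
    -- lower bound
    have hBlb : ∀ᶠ t : ℝ in atTop, (F t - F T) / ENNReal.ofReal t ≤ B t := by
      filter_upwards [eventually_ge_atTop T] with t ht
      have hlb : (F t - F T) * ENNReal.ofReal T
          ≤ ∫⁻ r in Set.Icc (0 : ℝ) T, ∫⁻ x in Set.Icc r (r + t), f x := by
        calc (F t - F T) * ENNReal.ofReal T
            = ∫⁻ r in Set.Icc (0 : ℝ) T, (F t - F T) := by
              rw [setLIntegral_const, Real.volume_Icc, sub_zero]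
          _ ≤ _ := by
              apply lintegral_mono_ae
              refine (ae_restrict_iff' measurableSet_Icc).2 (ae_of_all _ fun r hr => ?_)
              rw [tsub_le_iff_left]
              calc F t ≤ ∫⁻ x in Set.Icc (0 : ℝ) T ∪ Set.Icc r (r + t), f x := by
                    apply lintegral_mono_set
                    intro x hx
                    by_cases hxT : x ≤ T
                    · exact Or.inl ⟨hx.1, hxT⟩
                    · exact Or.inr ⟨by linarith [hr.2], by linarith [hx.2, hr.1]⟩
                _ ≤ F T + ∫⁻ x in Set.Icc r (r + t), f x := lintegral_union_le _ _ _
      simp only [hBdef]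
      rw [hpull, hswap]
      calc (F t - F T) / ENNReal.ofReal t
          = (F t - F T) * ENNReal.ofReal T / ENNReal.ofReal T / ENNReal.ofReal t := by
            rw [mul_div_cancel_right_e _ hT0 hTt]
        _ ≤ (∫⁻ r in Set.Icc (0 : ℝ) T, ∫⁻ x in Set.Icc r (r + t), f x)
              / ENNReal.ofReal T / ENNReal.ofReal t :=
            ENNReal.div_le_div_right (ENNReal.div_le_div_right hlb _) _
    refine le_antisymm ?_ ?_
    · -- L ≤ limsup B
      have hlow : ∀ m : ℕ, 0 < m →
          limsup (fun t : ℝ => F t / ENNReal.ofReal t) atTop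
            ≤ limsup B atTop + ((m : ENNReal))⁻¹ := by
        intro m hm
        have hminv : (0 : ENNReal) < (m : ENNReal)⁻¹ :=
          ENNReal.inv_pos.2 (ENNReal.natCast_ne_top m)
        have htend : Tendsto (fun t : ℝ => F T / ENNReal.ofReal t) atTop (𝓝 0) := by
          simp_rw [div_eq_mul_inv]
          have hinv : Tendsto (fun t : ℝ => (ENNReal.ofReal t)⁻¹) atTop (𝓝 0) := by
            have := ENNReal.tendsto_inv_iff.2 ENNReal.tendsto_ofReal_atTop
            simpa using this
          have := ENNReal.Tendsto.const_mul (a := F T) hinv (Or.inr hint.ne)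
          simpa using this
        have hev0 : ∀ᶠ t : ℝ in atTop, F T / ENNReal.ofReal t ≤ (m : ENNReal)⁻¹ :=
          (htend.eventually_lt_const hminv).mono fun t h => h.le
        have hev : ∀ᶠ t : ℝ in atTop,
            F t / ENNReal.ofReal t ≤ B t + (m : ENNReal)⁻¹ := by
          filter_upwards [eventually_ge_atTop T, hev0, hBlb] with t h1 h2 h3
          calc F t / ENNReal.ofReal t
              = ((F t - F T) + F T) / ENNReal.ofReal t := by
                rw [tsub_add_cancel_of_le (hFmono h1)]
            _ = (F t - F T) / ENNReal.ofReal t + F T / ENNReal.ofReal t := by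
                rw [ENNReal.div_add_div_same]
            _ ≤ B t + (m : ENNReal)⁻¹ := add_le_add h3 h2
        calc limsup (fun t : ℝ => F t / ENNReal.ofReal t) atTop
            ≤ limsup (fun t : ℝ => B t + (m : ENNReal)⁻¹) atTop := limsup_le_limsup hev
          _ = limsup B atTop + (m : ENNReal)⁻¹ :=
              limsup_add_const atTop B ((m : ENNReal))⁻¹
                (isBoundedUnder_of ⟨⊤, fun _ => le_top⟩)
                (IsBoundedUnder.isCoboundedUnder_le
                  (isBoundedUnder_of ⟨0, fun _ => zero_le⟩))
      have htend2 : Tendsto (fun m : ℕ => limsup B atTop + ((m : ENNReal))⁻¹) atTop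
          (𝓝 (limsup B atTop)) := by
        have := Tendsto.add (tendsto_const_nhds (x := limsup B atTop))
          ENNReal.tendsto_inv_nat_nhds_zero
        simpa using this
      exact ge_of_tendsto htend2 (eventually_atTop.2 ⟨1, fun m hm => hlow m hm⟩)
    · -- limsup B ≤ L
      calc limsup B atTop
          ≤ limsup (fun t : ℝ => F (t + T) / ENNReal.ofReal t) atTop :=
            limsup_le_limsup hBub
        _ ≤ limsup (fun t : ℝ => F t / ENNReal.ofReal t) atTop :=
            limsup_shift_real T hT F
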